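/- arXiv:2404.14350 — 3 statements merged into one kernel-verified Lean document; each statement's English description precedes it below -/
import Mathlib

section
/- For all n ∈ ℤ and all complex parameters α, ε₁, ε₂, the segment product function satisfies the reflection identity s_n^{ε₁,ε₂}(α) · s_{-n}^{ε₁,ε₂}(−α − ε₁ − ε₂) = (−1)^n. -/
/-- The triangle product `t_n^{ε₁,ε₂}(α)`: for `n > 0` the product of `α - i ε₁ - j ε₂`
over `i, j ≥ 0` with `i + j < n`; for `n < 0` the product of `α + i ε₁ + j ε₂` over
`i, j > 0` with `i + j ≤ -n`; and `t_0 = 1`. -/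
noncomputable def tFun (ε₁ ε₂ α : ℂ) (n : ℤ) : ℂ :=
  if 0 < n then
    ∏ i ∈ Finset.range n.toNat, ∏ j ∈ Finset.range (n.toNat - i),
      (α - (i : ℂ) * ε₁ - (j : ℂ) * ε₂)
  else
    ∏ i ∈ Finset.range (-n).toNat, ∏ j ∈ Finset.range ((-n).toNat - 1 - i),
      (α + ((i : ℂ) + 1) * ε₁ + ((j : ℂ) + 1) * ε₂)

/-- The segment product `s_n^{ε₁,ε₂}(α) = t_n^{ε₁,ε₂}(α) / t_{n-1}^{ε₁,ε₂}(α)`. -/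
noncomputable def sFun (ε₁ ε₂ α : ℂ) (n : ℤ) : ℂ :=
  tFun ε₁ ε₂ α n / tFun ε₁ ε₂ α (n - 1)

lemma tFun_ofNat (ε₁ ε₂ α : ℂ) (m : ℕ) :
    tFun ε₁ ε₂ α m = ∏ i ∈ Finset.range m, ∏ j ∈ Finset.range (m - i),
      (α - (i : ℂ) * ε₁ - (j : ℂ) * ε₂) := by
  rcases Nat.eq_zero_or_pos m with h | h
  · subst h; simp [tFun]
  · rw [tFun, if_pos (by exact_mod_cast h)]; simp

lemma tFun_neg (ε₁ ε₂ α : ℂ) (m : ℕ) :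
    tFun ε₁ ε₂ α (-(m : ℤ)) = ∏ i ∈ Finset.range m, ∏ j ∈ Finset.range (m - 1 - i),
      (α + ((i : ℂ) + 1) * ε₁ + ((j : ℂ) + 1) * ε₂) := by
  rw [tFun, if_neg (by omega)]; simp

lemma tFun_pos_step (ε₁ ε₂ α : ℂ) (m : ℕ) :
    tFun ε₁ ε₂ α ((m : ℤ) + 1) =
      tFun ε₁ ε₂ α m * ∏ i ∈ Finset.range (m + 1),
        (α - (i : ℂ) * ε₁ - ((m - i : ℕ) : ℂ) * ε₂) := by
  have : ((m : ℤ) + 1) = ((m + 1 : ℕ) : ℤ) := by push_cast; ring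
  rw [this, tFun_ofNat, tFun_ofNat]
  have h1 : ∀ i ∈ Finset.range (m + 1),
      (∏ j ∈ Finset.range (m + 1 - i), (α - (i : ℂ) * ε₁ - (j : ℂ) * ε₂))
      = (∏ j ∈ Finset.range (m - i), (α - (i : ℂ) * ε₁ - (j : ℂ) * ε₂))
        * (α - (i : ℂ) * ε₁ - ((m - i : ℕ) : ℂ) * ε₂) := by
    intro i hi
    rw [Finset.mem_range] at hi
    have : m + 1 - i = (m - i) + 1 := by omega
    rw [this, Finset.prod_range_succ]
  rw [Finset.prod_congr rfl h1, Finset.prod_mul_distrib, Finset.prod_range_succ]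
  simp [mul_comm]

lemma tFun_neg_step (ε₁ ε₂ α : ℂ) (m : ℕ) :
    tFun ε₁ ε₂ α (-((m : ℤ) + 1)) =
      tFun ε₁ ε₂ α (-(m : ℤ)) * ∏ i ∈ Finset.range m,
        (α + ((i : ℂ) + 1) * ε₁ + (((m - 1 - i : ℕ) : ℂ) + 1) * ε₂) := by
  have : (-((m : ℤ) + 1)) = -((m + 1 : ℕ) : ℤ) := by push_cast; ring
  rw [this, tFun_neg, tFun_neg]
  have e : ∀ i ∈ Finset.range m, (m + 1 - 1 - i) = (m - 1 - i) + 1 := by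
    intro i hi; rw [Finset.mem_range] at hi; omega
  rw [Finset.prod_range_succ]
  have : m + 1 - 1 - m = 0 := by omega
  rw [this]
  simp only [Finset.range_zero, Finset.prod_empty, mul_one]
  have h1 : ∀ i ∈ Finset.range m,
      (∏ j ∈ Finset.range (m + 1 - 1 - i), (α + ((i : ℂ) + 1) * ε₁ + ((j : ℂ) + 1) * ε₂))
      = (∏ j ∈ Finset.range (m - 1 - i), (α + ((i : ℂ) + 1) * ε₁ + ((j : ℂ) + 1) * ε₂))
        * (α + ((i : ℂ) + 1) * ε₁ + (((m - 1 - i : ℕ) : ℂ) + 1) * ε₂) := by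
    intro i hi
    rw [e i hi, Finset.prod_range_succ]
  rw [Finset.prod_congr rfl h1, Finset.prod_mul_distrib]

lemma main_pos (m : ℕ) (α β ε₁ ε₂ : ℂ) (hβ : β = -α - ε₁ - ε₂)
    (h₁ : tFun ε₁ ε₂ α m ≠ 0)
    (h₂ : tFun ε₁ ε₂ β (-((m : ℤ) + 2)) ≠ 0) :
    sFun ε₁ ε₂ α ((m : ℤ) + 1) * sFun ε₁ ε₂ β (-((m : ℤ) + 1)) = (-1 : ℂ) ^ (m + 1) := by
  have hstepβ := tFun_neg_step ε₁ ε₂ β (m + 1)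
  have e2 : (-((m : ℤ) + 2)) = -(((m + 1 : ℕ) : ℤ) + 1) := by push_cast; ring
  rw [e2] at h₂
  rw [hstepβ] at h₂
  have hβ1 : tFun ε₁ ε₂ β (-((m + 1 : ℕ) : ℤ)) ≠ 0 := left_ne_zero_of_mul h₂
  set P : ℂ := ∏ i ∈ Finset.range (m + 1),
      (β + ((i : ℂ) + 1) * ε₁ + (((m + 1 - 1 - i : ℕ) : ℂ) + 1) * ε₂) with hP
  have hPne : P ≠ 0 := right_ne_zero_of_mul h₂
  set A : ℂ := ∏ i ∈ Finset.range (m + 1),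
      (α - (i : ℂ) * ε₁ - ((m - i : ℕ) : ℂ) * ε₂) with hA
  have hPA : P = (-1 : ℂ) ^ (m + 1) * A := by
    have hterm : ∀ i ∈ Finset.range (m + 1),
        (β + ((i : ℂ) + 1) * ε₁ + (((m + 1 - 1 - i : ℕ) : ℂ) + 1) * ε₂)
        = (-1 : ℂ) * (α - (i : ℂ) * ε₁ - ((m - i : ℕ) : ℂ) * ε₂) := by
      intro i hi
      rw [Finset.mem_range] at hi
      have e3 : m + 1 - 1 - i = m - i := by omega
      rw [e3, hβ]
      have : ((m - i : ℕ) : ℂ) = (m : ℂ) - (i : ℂ) := by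
        push_cast [Nat.cast_sub (by omega : i ≤ m)]; ring
      rw [this]; ring
    rw [hP, hA, Finset.prod_congr rfl hterm, Finset.prod_mul_distrib,
      Finset.prod_const, Finset.card_range]
  have hAne : A ≠ 0 := by
    intro h; rw [h, mul_zero] at hPA; exact hPne hPA
  have hsA : sFun ε₁ ε₂ α ((m : ℤ) + 1) = A := by
    rw [sFun]
    have : (m : ℤ) + 1 - 1 = (m : ℤ) := by ring
    rw [this, tFun_pos_step, ← hA, mul_comm, mul_div_assoc, div_self h₁, mul_one]
  have hsB : sFun ε₁ ε₂ β (-((m : ℤ) + 1)) = 1 / P := by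
    rw [sFun]
    have e4 : (-((m : ℤ) + 1)) = -((m + 1 : ℕ) : ℤ) := by push_cast; ring
    have e5 : (-((m + 1 : ℕ) : ℤ)) - 1 = -(((m + 1 : ℕ) : ℤ) + 1) := by ring
    rw [e4, e5, hstepβ, div_mul_eq_div_div, div_self hβ1]
  rw [hsA, hsB, hPA]
  field_simp
  rw [← pow_mul, mul_two]
  have : ((-1 : ℂ)) ^ (m + 1 + (m + 1)) = 1 := by
    rw [← two_mul, pow_mul, neg_one_sq, one_pow]
  rw [this]

lemma neg_one_zpow_natCast (k : ℕ) : (-1 : ℂ) ^ (-((k : ℤ))) = (-1 : ℂ) ^ k := by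
  rw [zpow_neg, zpow_natCast]
  rcases Nat.even_or_odd k with h | h
  · rw [h.neg_one_pow]; norm_num
  · rw [h.neg_one_pow]; norm_num


/-- Reflection identity for the segment product:
`s_n^{ε₁,ε₂}(α) · s_{-n}^{ε₁,ε₂}(-α - ε₁ - ε₂) = (-1)^n`
(assuming the denominators defining the two segment products are nonzero). -/
theorem segment_reflection (n : ℤ) (α ε₁ ε₂ : ℂ)
    (h₁ : tFun ε₁ ε₂ α (n - 1) ≠ 0)
    (h₂ : tFun ε₁ ε₂ (-α - ε₁ - ε₂) (-n - 1) ≠ 0) :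
    sFun ε₁ ε₂ α n * sFun ε₁ ε₂ (-α - ε₁ - ε₂) (-n) = (-1 : ℂ) ^ n := by
  obtain ⟨m, rfl | rfl⟩ := Int.eq_nat_or_neg n
  · rcases m with _ | k
    · norm_num [sFun, tFun]
    · have e2 : ((k + 1 : ℕ) : ℤ) - 1 = (k : ℤ) := by push_cast; ring
      have e3 : -((k + 1 : ℕ) : ℤ) - 1 = -((k : ℤ) + 2) := by push_cast; ring
      rw [e2] at h₁; rw [e3] at h₂
      have key := main_pos k α (-α - ε₁ - ε₂) ε₁ ε₂ rfl h₁ h₂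
      rw [show ((k + 1 : ℕ) : ℤ) = (k : ℤ) + 1 by push_cast; ring, key,
        show (k : ℤ) + 1 = ((k + 1 : ℕ) : ℤ) by push_cast; ring, zpow_natCast]
  · rcases m with _ | k
    · norm_num [sFun, tFun]
    · have e1 : -(-((k + 1 : ℕ) : ℤ)) - 1 = (k : ℤ) := by push_cast; ring
      have e2 : -((k + 1 : ℕ) : ℤ) - 1 = -((k : ℤ) + 2) := by push_cast; ring
      rw [e1] at h₂; rw [e2] at h₁
      have key := main_pos k (-α - ε₁ - ε₂) α ε₁ ε₂ (by ring) h₂ h₁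
      rw [show -(-((k + 1 : ℕ) : ℤ)) = (k : ℤ) + 1 by push_cast; ring,
        show -((k + 1 : ℕ) : ℤ) = -((k : ℤ) + 1) by push_cast; ring,
        mul_comm, key, show -((k : ℤ) + 1) = -(((k + 1 : ℕ) : ℤ)) by push_cast; ring,
        neg_one_zpow_natCast]
end

section
/- For all n ∈ ℤ and all complex α, ε₁, ε₂, the triangle product function satisfies t_n^{ε₁,ε₂}(α) = (−1)^{n(n+1)/2} · t_{−n−1}^{ε₁,ε₂}(−α − ε₁ − ε₂). -/
lemma sum_tri (n : ℕ) : ∑ i ∈ Finset.range n, (n - i) = n*(n+1)/2 := by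
  have h := Finset.sum_range_reflect (fun i => n - i) n
  have h2 : ∑ j ∈ Finset.range n, (n - (n - 1 - j)) = ∑ j ∈ Finset.range n, (j+1) :=
    Finset.sum_congr rfl fun j hj => by
      have := Finset.mem_range.mp hj; omega
  rw [h2] at h
  have h3 : ∑ j ∈ Finset.range n, (j + 1) = ∑ j ∈ Finset.range (n+1), j := by
    rw [Finset.sum_range_succ' (fun i => i) n]; omega
  rw [← h, h3, Finset.sum_range_id, Nat.mul_comm]
  simp

lemma key (n : ℕ) (α ε₁ ε₂ : ℂ) :
    ∏ i ∈ Finset.range (n+1), ∏ j ∈ Finset.range (n - i),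
      ((-α-ε₁-ε₂) + ((i:ℂ)+1)*ε₁ + ((j:ℂ)+1)*ε₂)
    = (-1:ℂ)^(n*(n+1)/2) * ∏ i ∈ Finset.range n, ∏ j ∈ Finset.range (n-i),
        (α - (i:ℂ)*ε₁ - (j:ℂ)*ε₂) := by
  rw [Finset.prod_range_succ]
  simp only [Nat.sub_self, Finset.range_zero, Finset.prod_empty, mul_one]
  have h : ∀ i ∈ Finset.range n, ∏ j ∈ Finset.range (n-i),
      ((-α-ε₁-ε₂) + ((i:ℂ)+1)*ε₁ + ((j:ℂ)+1)*ε₂)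
      = (-1:ℂ)^(n-i) * ∏ j ∈ Finset.range (n-i), (α - (i:ℂ)*ε₁ - (j:ℂ)*ε₂) := by
    intro i _
    calc ∏ j ∈ Finset.range (n-i), ((-α-ε₁-ε₂) + ((i:ℂ)+1)*ε₁ + ((j:ℂ)+1)*ε₂)
        = ∏ j ∈ Finset.range (n-i), ((-1:ℂ) * (α - (i:ℂ)*ε₁ - (j:ℂ)*ε₂)) :=
          Finset.prod_congr rfl fun j _ => by ring
      _ = _ := by rw [Finset.prod_mul_distrib, Finset.prod_const, Finset.card_range]
  rw [Finset.prod_congr rfl h, Finset.prod_mul_distrib, Finset.prod_pow_eq_pow_sum, sum_tri]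

lemma sign_sq (e : ℤ) : (-1:ℂ)^e * (-1:ℂ)^e = 1 := by
  rw [← zpow_add₀ (by norm_num : (-1:ℂ) ≠ 0)]
  have : e + e = 2 * e := by ring
  rw [this, zpow_mul]
  norm_num

lemma main_nonneg (n : ℤ) (hn : 0 ≤ n) (α ε₁ ε₂ : ℂ) :
    tFun ε₁ ε₂ α n = (-1 : ℂ) ^ (n * (n + 1) / 2) * tFun ε₁ ε₂ (-α - ε₁ - ε₂) (-n - 1) := by
  obtain ⟨m, rfl⟩ := Int.eq_ofNat_of_zero_le hn
  rcases Nat.eq_zero_or_pos m with rfl | hm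
  · simp [tFun]
  · have h1 : (0:ℤ) < (m:ℤ) := by exact_mod_cast hm
    have h2 : ¬ (0:ℤ) < -(m:ℤ) - 1 := by omega
    rw [tFun, tFun, if_pos h1, if_neg h2]
    have h3 : (-(-(m:ℤ) - 1)).toNat = m + 1 := by omega
    have h4 : (m:ℤ).toNat = m := by omega
    rw [h3, h4]
    have h5 : ∀ i, m + 1 - 1 - i = m - i := fun i => by omega
    simp only [h5]
    rw [key m α ε₁ ε₂]
    have h6 : (m:ℤ) * ((m:ℤ) + 1) / 2 = ((m * (m+1) / 2 : ℕ) : ℤ) := by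
      have e1 : (m:ℤ) * ((m:ℤ)+1) = ((m*(m+1) : ℕ) : ℤ) := by push_cast; ring
      rw [e1]
      generalize m*(m+1) = N
      omega
    rw [h6, zpow_natCast, ← mul_assoc]
    rw [← pow_add]
    have h7 : (-1:ℂ) ^ (m * (m+1) / 2 + m * (m+1) / 2) = 1 := by
      rw [← two_mul, pow_mul]; norm_num
    rw [h7, one_mul]

/-- Reflection symmetry of the triangle product:
`t_n^{ε₁,ε₂}(α) = (-1)^{n(n+1)/2} · t_{-n-1}^{ε₁,ε₂}(-α - ε₁ - ε₂)`. -/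
theorem triangle_reflection (n : ℤ) (α ε₁ ε₂ : ℂ) :
    tFun ε₁ ε₂ α n = (-1 : ℂ) ^ (n * (n + 1) / 2) * tFun ε₁ ε₂ (-α - ε₁ - ε₂) (-n - 1) := by
  rcases le_or_gt 0 n with hn | hn
  · exact main_nonneg n hn α ε₁ ε₂
  · set m : ℤ := -n - 1 with hm
    have hm0 : 0 ≤ m := by omega
    have h := main_nonneg m hm0 (-α - ε₁ - ε₂) ε₁ ε₂
    have e1 : -(-α - ε₁ - ε₂) - ε₁ - ε₂ = α := by ring
    have e2 : -m - 1 = n := by omega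
    have e3 : m * (m + 1) / 2 = n * (n + 1) / 2 := by
      have : m * (m + 1) = n * (n + 1) := by rw [hm]; ring
      rw [this]
    rw [e1, e2, e3] at h
    rw [h, ← mul_assoc, sign_sq, one_mul]
end

section
/- Let g(a₁,a₂,a₃) = Γ(a₃)Γ(a₂ − a₁)/(Γ(a₂)Γ(a₃ − a₁)), let Î(a) = (a₁ − a₃ + 1, a₂ − a₃ + 1, 2 − a₃), Ŝ(a) = (a₂, a₁, a₃). Then for all a ∈ ℂ³ and r ∈ ℤ³ avoiding poles of Gamma, the following two expressions coincide: g(Ŝa)·g(−a − r) / (g(ŜÎa)·g(Î(−a − r))) = g(a)·g(Ŝ(−a − r)) / (g(Îa)·g(ŜÎ(−a − r))). -/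
open Complex

/-- `g(a₁,a₂,a₃) = Γ(a₃)Γ(a₂-a₁)/(Γ(a₂)Γ(a₃-a₁))`. -/
noncomputable def gConn (a : ℂ × ℂ × ℂ) : ℂ :=
  Complex.Gamma a.2.2 * Complex.Gamma (a.2.1 - a.1) /
    (Complex.Gamma a.2.1 * Complex.Gamma (a.2.2 - a.1))

/-- `Î(a₁,a₂,a₃) = (a₁ - a₃ + 1, a₂ - a₃ + 1, 2 - a₃)`. -/
def Ihat (a : ℂ × ℂ × ℂ) : ℂ × ℂ × ℂ :=
  (a.1 - a.2.2 + 1, a.2.1 - a.2.2 + 1, 2 - a.2.2)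

/-- `Ŝ(a₁,a₂,a₃) = (a₂, a₁, a₃)`. -/
def Shat (a : ℂ × ℂ × ℂ) : ℂ × ℂ × ℂ :=
  (a.2.1, a.1, a.2.2)

lemma csin_shift' (x : ℂ) (n : ℤ) :
    Complex.sin (x - n * (Real.pi : ℝ)) = (-1) ^ n * Complex.sin x :=
  n.cast_negOnePow ℂ ▸ Complex.sin_antiperiodic.sub_int_mul_eq n

/-- Reflection-type shift: `Γ(-z-k)Γ(1-(-z-k)) = (-1)^(k+1) Γ(z)Γ(1-z)`. -/
lemma Gshift (z : ℂ) (k : ℤ) :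
    Complex.Gamma (-z - k) * Complex.Gamma (1 - (-z - k)) =
      (-1) ^ (k + 1) * (Complex.Gamma z * Complex.Gamma (1 - z)) := by
  rw [Complex.Gamma_mul_Gamma_one_sub, Complex.Gamma_mul_Gamma_one_sub]
  have h1 : (Real.pi : ℂ) * (-z - k) = -((Real.pi : ℂ) * z) - k * (Real.pi : ℝ) := by
    ring
  rw [h1, csin_shift', Complex.sin_neg]
  rcases eq_or_ne (Complex.sin ((Real.pi : ℂ) * z)) 0 with h | h
  · simp [h]
  · have hc : ((-1 : ℂ)) ^ k * (-1) ^ (k + 1) = -1 := by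
      rw [← zpow_add₀ (by norm_num : (-1 : ℂ) ≠ 0),
        show k + (k + 1) = 2 * k + 1 by ring,
        zpow_add₀ (by norm_num : (-1 : ℂ) ≠ 0), zpow_mul]
      norm_num
    have hpow : ((-1 : ℂ)) ^ k ≠ 0 := zpow_ne_zero _ (by norm_num)
    field_simp
    linear_combination -hc

lemma sign_identity (r1 r2 r3 : ℤ) :
    ((-1 : ℂ)) ^ (r1 + 1) * (-1) ^ (r3 - r2 + 1) =
      (-1) ^ (r2 + 1) * (-1) ^ (r3 - r1 + 1) := by
  rw [← zpow_add₀ (by norm_num : (-1 : ℂ) ≠ 0), ← zpow_add₀ (by norm_num : (-1 : ℂ) ≠ 0),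
    show r1 + 1 + (r3 - r2 + 1) = r2 + 1 + (r3 - r1 + 1) + 2 * (r1 - r2) by ring,
    zpow_add₀ (by norm_num : (-1 : ℂ) ≠ 0), zpow_mul]
  norm_num

/-- Consistency of the two computations of the monodromy-cancellation coefficient:
for `a ∈ ℂ³`, `r ∈ ℤ³` avoiding poles of all the Gamma functions involved,
`g(Ŝa)g(-a-r)/(g(ŜÎa)g(Î(-a-r))) = g(a)g(Ŝ(-a-r))/(g(Îa)g(ŜÎ(-a-r)))`. -/
theorem monodromy_coefficient_consistency (a : ℂ × ℂ × ℂ) (r : ℤ × ℤ × ℤ)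
    (nar : ℂ × ℂ × ℂ)
    (hnar : nar = (-a.1 - (r.1 : ℂ), -a.2.1 - (r.2.1 : ℂ), -a.2.2 - (r.2.2 : ℂ)))
    (hgen : ∀ x ∈ [Shat a, nar, Shat (Ihat a), Ihat nar, a, Shat nar, Ihat a,
        Shat (Ihat nar)],
      Complex.Gamma x.2.2 ≠ 0 ∧ Complex.Gamma (x.2.1 - x.1) ≠ 0 ∧
      Complex.Gamma x.2.1 ≠ 0 ∧ Complex.Gamma (x.2.2 - x.1) ≠ 0) :
    gConn (Shat a) * gConn nar / (gConn (Shat (Ihat a)) * gConn (Ihat nar)) =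
      gConn a * gConn (Shat nar) / (gConn (Ihat a) * gConn (Shat (Ihat nar))) := by
  obtain ⟨a1, a2, a3⟩ := a
  obtain ⟨r1, r2, r3⟩ := r
  subst hnar
  simp only [Prod.fst, Prod.snd] at hgen
  obtain ⟨h1a, h1b, h1c, h1d⟩ := hgen (Shat (a1, a2, a3)) (by simp)
  obtain ⟨h2a, h2b, h2c, h2d⟩ := hgen (-a1 - (r1 : ℂ), -a2 - (r2 : ℂ), -a3 - (r3 : ℂ)) (by simp)
  obtain ⟨h3a, h3b, h3c, h3d⟩ := hgen (Shat (Ihat (a1, a2, a3))) (by simp)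
  obtain ⟨h4a, h4b, h4c, h4d⟩ :=
    hgen (Ihat (-a1 - (r1 : ℂ), -a2 - (r2 : ℂ), -a3 - (r3 : ℂ))) (by simp)
  obtain ⟨h5a, h5b, h5c, h5d⟩ := hgen (a1, a2, a3) (by simp)
  obtain ⟨h6a, h6b, h6c, h6d⟩ :=
    hgen (Shat (-a1 - (r1 : ℂ), -a2 - (r2 : ℂ), -a3 - (r3 : ℂ))) (by simp)
  obtain ⟨h7a, h7b, h7c, h7d⟩ := hgen (Ihat (a1, a2, a3)) (by simp)
  obtain ⟨h8a, h8b, h8c, h8d⟩ :=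
    hgen (Shat (Ihat (-a1 - (r1 : ℂ), -a2 - (r2 : ℂ), -a3 - (r3 : ℂ)))) (by simp)
  simp only [gConn, Shat, Ihat] at h1a h1b h1c h1d h2a h2b h2c h2d h3a h3b h3c h3d h4a h4b h4c h4d h5a h5b h5c h5d h6a h6b h6c h6d h7a h7b h7c h7d h8a h8b h8c h8d ⊢
  have key :
      (Complex.Gamma a2 * Complex.Gamma (1 - a2)) *
        (Complex.Gamma (a3 - a1) * Complex.Gamma (1 - (a3 - a1))) *
        (Complex.Gamma (-a1 - (r1 : ℂ)) * Complex.Gamma (1 - (-a1 - (r1 : ℂ)))) *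
        (Complex.Gamma (-(a3 - a2) - ((r3 - r2 : ℤ) : ℂ)) *
          Complex.Gamma (1 - (-(a3 - a2) - ((r3 - r2 : ℤ) : ℂ)))) =
      (Complex.Gamma a1 * Complex.Gamma (1 - a1)) *
        (Complex.Gamma (a3 - a2) * Complex.Gamma (1 - (a3 - a2))) *
        (Complex.Gamma (-a2 - (r2 : ℂ)) * Complex.Gamma (1 - (-a2 - (r2 : ℂ)))) *
        (Complex.Gamma (-(a3 - a1) - ((r3 - r1 : ℤ) : ℂ)) *
          Complex.Gamma (1 - (-(a3 - a1) - ((r3 - r1 : ℤ) : ℂ)))) := by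
    rw [Gshift a1 r1, Gshift (a3 - a2) (r3 - r2), Gshift a2 r2, Gshift (a3 - a1) (r3 - r1)]
    linear_combination (Complex.Gamma a1 * Complex.Gamma (1 - a1) *
      (Complex.Gamma a2 * Complex.Gamma (1 - a2)) *
      (Complex.Gamma (a3 - a1) * Complex.Gamma (1 - (a3 - a1))) *
      (Complex.Gamma (a3 - a2) * Complex.Gamma (1 - (a3 - a2)))) * sign_identity r1 r2 r3
  field_simp
  rw [show a1 - a3 + 1 - (a2 - a3 + 1) = a1 - a2 by ring,
    show a2 - a3 + 1 - (a1 - a3 + 1) = a2 - a1 by ring,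
    show -a1 - (r1 : ℂ) - (-a3 - (r3 : ℂ)) + 1 - (-a2 - (r2 : ℂ) - (-a3 - (r3 : ℂ)) + 1)
        = -a1 - (r1 : ℂ) - (-a2 - (r2 : ℂ)) by ring,
    show -a2 - (r2 : ℂ) - (-a3 - (r3 : ℂ)) + 1 - (-a1 - (r1 : ℂ) - (-a3 - (r3 : ℂ)) + 1)
        = -a2 - (r2 : ℂ) - (-a1 - (r1 : ℂ)) by ring,
    show (2 : ℂ) - a3 - (a2 - a3 + 1) = 1 - a2 by ring,
    show (2 : ℂ) - a3 - (a1 - a3 + 1) = 1 - a1 by ring,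
    show 2 - (-a3 - (r3 : ℂ)) - (-a1 - (r1 : ℂ) - (-a3 - (r3 : ℂ)) + 1)
        = 1 - (-a1 - (r1 : ℂ)) by ring,
    show 2 - (-a3 - (r3 : ℂ)) - (-a2 - (r2 : ℂ) - (-a3 - (r3 : ℂ)) + 1)
        = 1 - (-a2 - (r2 : ℂ)) by ring,
    show a1 - a3 + 1 = 1 - (a3 - a1) by ring,
    show a2 - a3 + 1 = 1 - (a3 - a2) by ring,
    show -a2 - (r2 : ℂ) - (-a3 - (r3 : ℂ)) + 1
        = 1 - (-(a3 - a2) - ((r3 - r2 : ℤ) : ℂ)) by push_cast; ring,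
    show -a1 - (r1 : ℂ) - (-a3 - (r3 : ℂ)) + 1
        = 1 - (-(a3 - a1) - ((r3 - r1 : ℤ) : ℂ)) by push_cast; ring,
    show -a3 - (r3 : ℂ) - (-a2 - (r2 : ℂ)) = -(a3 - a2) - ((r3 - r2 : ℤ) : ℂ) by
      push_cast; ring,
    show -a3 - (r3 : ℂ) - (-a1 - (r1 : ℂ)) = -(a3 - a1) - ((r3 - r1 : ℤ) : ℂ) by
      push_cast; ring]
  linear_combination (Complex.Gamma (a1 - a2) *
    Complex.Gamma (-a2 - (r2 : ℂ) - (-a1 - (r1 : ℂ))) *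
    Complex.Gamma (a2 - a1) *
    Complex.Gamma (-a1 - (r1 : ℂ) - (-a2 - (r2 : ℂ)))) * key
end
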